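/- arXiv:2411.02726 — 4 statements merged into one kernel-verified Lean document; each statement's English description precedes it below -/
import Mathlib

section
/- With L as the Elliptical Wishart negative log-likelihood on symmetric positive definite matrices, G is a critical point of L (i.e., the Euclidean gradient of L at G vanishes) if and only if G = (1/(nK))·Σ_{k=1}^K u(tr(G⁻¹S_k))·S_k. -/
open Matrix

/-- Critical point characterization: the Euclidean gradient
grad L(G) = (1/2) G⁻¹ (nK G - Σₖ u(tr(G⁻¹Sₖ)) Sₖ) G⁻¹ vanishes at an SPD matrix G
iff G satisfies the fixed-point equation G = (1/(nK)) Σₖ u(tr(G⁻¹Sₖ)) Sₖ. -/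
theorem critical_point_iff_fixed_point
    (p n K : ℕ) (hn : 0 < n) (hK : 0 < K)
    (S : Fin K → Matrix (Fin p) (Fin p) ℝ) (hS : ∀ k, (S k).PosDef)
    (u : ℝ → ℝ)
    (G : Matrix (Fin p) (Fin p) ℝ) (hG : G.PosDef) :
    (1 / 2 : ℝ) •
        (G⁻¹ * ((n * K : ℝ) • G - ∑ k, u ((G⁻¹ * S k).trace) • S k) * G⁻¹) = 0 ↔
      G = (1 / (n * K) : ℝ) • ∑ k, u ((G⁻¹ * S k).trace) • S k := by
  set Sm := ∑ k, u ((G⁻¹ * S k).trace) • S k with hSm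
  have hGu : IsUnit G.det := isUnit_iff_ne_zero.mpr hG.det_pos.ne'
  have hnK : (n * K : ℝ) ≠ 0 := by
    have : (0:ℝ) < n * K := by positivity
    exact this.ne'
  constructor
  · intro h
    have h2 : G⁻¹ * ((n * K : ℝ) • G - Sm) * G⁻¹ = 0 := by
      have : (1/2 : ℝ) ≠ 0 := by norm_num
      exact (smul_eq_zero.mp h).resolve_left this
    have h3 : (n * K : ℝ) • G - Sm = 0 := by
      have := congrArg (fun M => G * M * G) h2
      simpa [Matrix.mul_assoc, Matrix.nonsing_inv_mul G hGu,
        Matrix.mul_nonsing_inv_cancel_left G _ hGu] using this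
    have h4 : (n * K : ℝ) • G = Sm := sub_eq_zero.mp h3
    calc G = (1 / (n * K) : ℝ) • ((n * K : ℝ) • G) := by
            rw [smul_smul]; field_simp; rw [one_smul]
      _ = (1 / (n * K) : ℝ) • Sm := by rw [h4]
  · intro h
    have h4 : (n * K : ℝ) • G = Sm := by
      rw [h, smul_smul]; field_simp; rw [one_smul]
    rw [h4, sub_self, Matrix.mul_zero, Matrix.zero_mul, smul_zero]
end

section
/- Let ν > 0, n, p positive integers, K a positive integer, and s₁,…,s_K > 0. The function L : ℝ → ℝ defined by L(x) = (nKp/2)·x + ((ν+np)/2)·Σ_{k=1}^K log(1 + s_k·e^{-x}/ν) is strictly convex on ℝ. -/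
/-- Strict convexity of the t-Wishart negative log-likelihood along the geodesic
of scalar matrices: x ↦ (nKp/2)x + ((ν+np)/2) Σₖ log(1 + sₖ e^(-x)/ν) is strictly
convex on ℝ. -/
theorem tWishart_scalar_strictly_convex
    (ν : ℝ) (hν : 0 < ν) (n p K : ℕ) (hn : 0 < n) (hp : 0 < p) (hK : 0 < K)
    (s : Fin K → ℝ) (hs : ∀ k, 0 < s k) :
    StrictConvexOn ℝ Set.univ
      (fun x : ℝ => (n * K * p / 2 : ℝ) * x +
        ((ν + n * p) / 2) * ∑ k, Real.log (1 + s k * Real.exp (-x) / ν)) := by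
  set a : ℝ := (n * K * p / 2 : ℝ) with hadef
  set b : ℝ := (ν + n * p) / 2 with hbdef
  have hb : 0 < b := by positivity
  have hden : ∀ (k : Fin K) (x : ℝ), 0 < 1 + s k * Real.exp (-x) / ν := by
    intro k x
    have := hs k
    positivity
  have hexp : ∀ x : ℝ, HasDerivAt (fun x : ℝ => Real.exp (-x)) (-Real.exp (-x)) x := by
    intro x
    simpa [Function.comp_def] using ((Real.hasDerivAt_exp (-x)).comp x ((hasDerivAt_id x).neg))
  have hnum : ∀ (k : Fin K) (x : ℝ),
      HasDerivAt (fun x : ℝ => 1 + s k * Real.exp (-x) / ν)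
        (-(s k * Real.exp (-x) / ν)) x := by
    intro k x
    have := (((hexp x).const_mul (s k)).div_const ν).const_add 1
    exact this.congr_deriv (by ring)
  have hg : ∀ (k : Fin K) (x : ℝ),
      HasDerivAt (fun x : ℝ => Real.log (1 + s k * Real.exp (-x) / ν))
        (-(s k * Real.exp (-x) / ν) / (1 + s k * Real.exp (-x) / ν)) x :=
    fun k x => (hnum k x).log (ne_of_gt (hden k x))
  set F : ℝ → ℝ := fun x : ℝ => a * x + b * ∑ k, Real.log (1 + s k * Real.exp (-x) / ν)
    with hFdef
  set D1 : ℝ → ℝ := fun x => a + b * ∑ k,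
      -(s k * Real.exp (-x) / ν) / (1 + s k * Real.exp (-x) / ν) with hD1def
  have hF : ∀ x : ℝ, HasDerivAt F (D1 x) x := by
    intro x
    have hax : HasDerivAt (fun x : ℝ => a * x) a x := by
      simpa using (hasDerivAt_id x).const_mul a
    exact hax.add ((HasDerivAt.fun_sum (u := Finset.univ) (fun k _ => hg k x)).const_mul b)
  have hD1 : ∀ x : ℝ, HasDerivAt D1
      (b * ∑ k, (s k * Real.exp (-x) / ν) / (1 + s k * Real.exp (-x) / ν) ^ 2) x := by
    intro x
    have hterm : ∀ k : Fin K, HasDerivAt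
        (fun x : ℝ => -(s k * Real.exp (-x) / ν) / (1 + s k * Real.exp (-x) / ν))
        ((s k * Real.exp (-x) / ν) / (1 + s k * Real.exp (-x) / ν) ^ 2) x := by
      intro k
      have hN : HasDerivAt (fun x : ℝ => -(s k * Real.exp (-x) / ν))
          (s k * Real.exp (-x) / ν) x := by
        have := (((hexp x).const_mul (s k)).div_const ν).neg
        exact this.congr_deriv (by ring)
      have h := hN.div (hnum k x) (ne_of_gt (hden k x))
      exact h.congr_deriv (by congr 1; ring)
    exact ((HasDerivAt.fun_sum (u := Finset.univ) (fun k _ => hterm k)).const_mul b).const_add a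
  have hderivF : deriv F = D1 := funext fun x => (hF x).deriv
  apply strictConvexOn_of_deriv2_pos convex_univ
    (fun x _ => ((hF x).differentiableAt.continuousAt).continuousWithinAt)
  intro x _
  have : deriv^[2] F x = b * ∑ k, (s k * Real.exp (-x) / ν) / (1 + s k * Real.exp (-x) / ν) ^ 2 := by
    show deriv (deriv F) x = _
    rw [hderivF]
    exact (hD1 x).deriv
  rw [this]
  have hpos : ∀ k : Fin K, 0 < (s k * Real.exp (-x) / ν) / (1 + s k * Real.exp (-x) / ν) ^ 2 := by
    intro k
    have := hs k
    have := hden k x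
    positivity
  have hsum : 0 < ∑ k, (s k * Real.exp (-x) / ν) / (1 + s k * Real.exp (-x) / ν) ^ 2 :=
    Finset.sum_pos (fun k _ => hpos k) (by simpa [Finset.univ_nonempty_iff] using Fin.pos_iff_nonempty.mp hK)
  exact mul_pos hb hsum
end

section
/- Let A, B be p×p symmetric positive definite matrices and S a symmetric positive definite matrix. Along the geodesic γ(t) = A^{1/2}(A^{-1/2}BA^{-1/2})^t A^{1/2} of the affine-invariant metric, the function t ↦ log tr(γ(t)⁻¹ S) is convex on [0,1]. -/
open Matrix

/-- The positive semidefinite square root (Mathlib's former `Matrix.PosSemidef.sqrt`). -/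
noncomputable def Matrix.PosSemidef.sqrt {n 𝕜 : Type*} [Fintype n] [DecidableEq n] [RCLike 𝕜]
    [PartialOrder 𝕜]
    {A : Matrix n n 𝕜} (hA : A.PosSemidef) : Matrix n n 𝕜 :=
  hA.1.eigenvectorUnitary.1 * diagonal ((↑) ∘ (√·) ∘ hA.1.eigenvalues) *
    (star hA.1.eigenvectorUnitary : Matrix n n 𝕜)

/-- Real power of a symmetric matrix via its spectral decomposition. -/
noncomputable def matRPow {p : ℕ} {M : Matrix (Fin p) (Fin p) ℝ}
    (hM : M.IsHermitian) (t : ℝ) : Matrix (Fin p) (Fin p) ℝ :=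
  (hM.eigenvectorUnitary : Matrix (Fin p) (Fin p) ℝ) *
    Matrix.diagonal (fun i => hM.eigenvalues i ^ t) *
    star (hM.eigenvectorUnitary : Matrix (Fin p) (Fin p) ℝ)

section Aux
variable {p : ℕ} {M : Matrix (Fin p) (Fin p) ℝ} (hM : M.IsHermitian)

lemma posDef_conj {X P : Matrix (Fin p) (Fin p) ℝ} (hX : X.PosDef) (hP : IsUnit P) :
    (Pᴴ * X * P).PosDef := by
  refine Matrix.PosDef.of_dotProduct_mulVec_pos (isHermitian_conjTranspose_mul_mul P hX.1) fun x hx => ?_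
  have hPx : P *ᵥ x ≠ 0 := by
    intro h
    exact hx <| (Matrix.mulVec_injective_iff_isUnit.mpr hP) (by simpa using h)
  simpa only [star_mulVec, dotProduct_mulVec, vecMul_vecMul] using hX.dotProduct_mulVec_pos hPx

lemma posDef_of_posSemidef_isUnit {X : Matrix (Fin p) (Fin p) ℝ} (h1 : X.PosSemidef)
    (h2 : IsUnit X) : X.PosDef := by
  refine Matrix.PosDef.of_dotProduct_mulVec_pos h1.1 fun x hx => ?_
  rcases (h1.dotProduct_mulVec_nonneg x).lt_or_eq with h | h
  · exact h
  · exfalso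
    have h0 : X *ᵥ x = 0 := (h1.dotProduct_mulVec_zero_iff x).mp h.symm
    exact hx <| (Matrix.mulVec_injective_iff_isUnit.mpr h2) (by simpa using h0)

lemma posDef_diag_pos {X : Matrix (Fin p) (Fin p) ℝ} (hX : X.PosDef) (i : Fin p) :
    0 < X i i := by
  have := hX.dotProduct_mulVec_pos (x := Pi.single i 1) (by simp [Pi.single_eq_same, Function.ne_iff])
  simpa [dotProduct, mulVec, Pi.single_apply, Finset.sum_ite_eq] using this

lemma matRPow_mul (hpos : ∀ i, 0 < hM.eigenvalues i) (s t : ℝ) :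
    matRPow hM s * matRPow hM t = matRPow hM (s + t) := by
  have hU : star (hM.eigenvectorUnitary : Matrix (Fin p) (Fin p) ℝ) *
      (hM.eigenvectorUnitary : Matrix (Fin p) (Fin p) ℝ) = 1 :=
    Unitary.star_mul_self_of_mem hM.eigenvectorUnitary.2
  simp only [matRPow, Matrix.mul_assoc]
  rw [← Matrix.mul_assoc (star _) _ _, hU, Matrix.one_mul,
    ← Matrix.mul_assoc (Matrix.diagonal _) (Matrix.diagonal _), Matrix.diagonal_mul_diagonal]
  have : (fun i => hM.eigenvalues i ^ s * hM.eigenvalues i ^ t)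
      = fun i => hM.eigenvalues i ^ (s + t) :=
    funext fun i => (Real.rpow_add (hpos i) s t).symm
  rw [this]

lemma matRPow_zero' : matRPow hM 0 = 1 := by
  have hU : (hM.eigenvectorUnitary : Matrix (Fin p) (Fin p) ℝ) *
      star (hM.eigenvectorUnitary : Matrix (Fin p) (Fin p) ℝ) = 1 :=
    Unitary.mul_star_self_of_mem hM.eigenvectorUnitary.2
  simp only [matRPow, Real.rpow_zero]
  rw [show (fun _ : Fin p => (1:ℝ)) = fun _ => 1 from rfl]
  rw [Matrix.diagonal_one, Matrix.mul_one, hU]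

lemma matRPow_inv (hpos : ∀ i, 0 < hM.eigenvalues i) (t : ℝ) :
    (matRPow hM t)⁻¹ = matRPow hM (-t) := by
  apply Matrix.inv_eq_right_inv
  rw [matRPow_mul hM hpos, add_neg_cancel, matRPow_zero']

lemma convexOn_log_sum_exp (hp : 0 < p) {c : Fin p → ℝ} (a : Fin p → ℝ) (hc : ∀ i, 0 < c i) :
    ConvexOn ℝ (Set.Icc (0:ℝ) 1) (fun t => Real.log (∑ i, c i * Real.exp (a i * t))) := by
  have : Nonempty (Fin p) := ⟨⟨0, hp⟩⟩
  have hF : ∀ t : ℝ, 0 < ∑ i, c i * Real.exp (a i * t) := fun t =>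
    Finset.sum_pos (fun i _ => mul_pos (hc i) (Real.exp_pos _)) Finset.univ_nonempty
  refine ⟨convex_Icc 0 1, fun x _ y _ u v hu hv huv => ?_⟩
  set X := ∑ i, c i * Real.exp (a i * x) with hX
  set Y := ∑ i, c i * Real.exp (a i * y) with hY
  have hXp := hF x
  have hYp := hF y
  have key : (∑ i, c i * Real.exp (a i * (u * x + v * y))) ≤ X ^ u * Y ^ v := by
    have step : ∀ i : Fin p, c i * Real.exp (a i * (u * x + v * y)) =
        X ^ u * Y ^ v * (((c i * Real.exp (a i * x)) / X) ^ u *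
          ((c i * Real.exp (a i * y)) / Y) ^ v) := by
      intro i
      have hfi : (0:ℝ) < c i * Real.exp (a i * x) := mul_pos (hc i) (Real.exp_pos _)
      have hgi : (0:ℝ) < c i * Real.exp (a i * y) := mul_pos (hc i) (Real.exp_pos _)
      rw [Real.div_rpow hfi.le hXp.le, Real.div_rpow hgi.le hYp.le,
        Real.mul_rpow (hc i).le (Real.exp_pos _).le, Real.mul_rpow (hc i).le (Real.exp_pos _).le,
        ← Real.exp_mul, ← Real.exp_mul]
      have hc1 : c i ^ u * c i ^ v = c i := by
        rw [← Real.rpow_add (hc i), huv, Real.rpow_one]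
      have hXu : X ^ u ≠ 0 := (Real.rpow_pos_of_pos hXp u).ne'
      have hYv : Y ^ v ≠ 0 := (Real.rpow_pos_of_pos hYp v).ne'
      rw [show X ^ u * Y ^ v * (c i ^ u * Real.exp (a i * x * u) / X ^ u *
            (c i ^ v * Real.exp (a i * y * v) / Y ^ v)) =
          (c i ^ u * c i ^ v) * (Real.exp (a i * x * u) * Real.exp (a i * y * v)) *
            (X ^ u / X ^ u) * (Y ^ v / Y ^ v) by ring,
        hc1, ← Real.exp_add, div_self hXu, div_self hYv]
      ring_nf
    calc (∑ i, c i * Real.exp (a i * (u * x + v * y)))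
        = X ^ u * Y ^ v * ∑ i, (((c i * Real.exp (a i * x)) / X) ^ u *
            ((c i * Real.exp (a i * y)) / Y) ^ v) := by
          rw [Finset.mul_sum]; exact Finset.sum_congr rfl fun i _ => step i
      _ ≤ X ^ u * Y ^ v * ∑ i, (u * ((c i * Real.exp (a i * x)) / X) +
            v * ((c i * Real.exp (a i * y)) / Y)) := by
          refine mul_le_mul_of_nonneg_left (Finset.sum_le_sum fun i _ => ?_)
            (mul_nonneg (Real.rpow_nonneg hXp.le u) (Real.rpow_nonneg hYp.le v))
          exact Real.geom_mean_le_arith_mean2_weighted hu hv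
            (div_nonneg (mul_pos (hc i) (Real.exp_pos _)).le hXp.le)
            (div_nonneg (mul_pos (hc i) (Real.exp_pos _)).le hYp.le) huv
      _ = X ^ u * Y ^ v := by
          rw [Finset.sum_add_distrib, ← Finset.mul_sum, ← Finset.mul_sum,
            ← Finset.sum_div, ← Finset.sum_div, ← hX, ← hY,
            div_self hXp.ne', div_self hYp.ne']
          rw [mul_one, mul_one, huv, mul_one]
  calc Real.log (∑ i, c i * Real.exp (a i * (u * x + v * y)))
      ≤ Real.log (X ^ u * Y ^ v) := Real.log_le_log (hF _) key
    _ = u * Real.log X + v * Real.log Y := by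
        rw [Real.log_mul (Real.rpow_pos_of_pos hXp u).ne' (Real.rpow_pos_of_pos hYp v).ne',
          Real.log_rpow hXp, Real.log_rpow hYp]
    _ = u • Real.log X + v • Real.log Y := by simp

end Aux

set_option maxHeartbeats 2000000 in
/-- Along the affine-invariant geodesic γ(t) = A^(1/2) (A^(-1/2) B A^(-1/2))^t A^(1/2)
between SPD matrices A and B, the map t ↦ log tr(γ(t)⁻¹ S) is convex on [0,1]. -/
theorem log_trace_inv_geodesic_convex
    (p : ℕ) (hp : 0 < p)
    (A B S : Matrix (Fin p) (Fin p) ℝ)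
    (hA : A.PosDef) (hB : B.PosDef) (hS : S.PosDef)
    (hM : ((hA.posSemidef.sqrt)⁻¹ * B * (hA.posSemidef.sqrt)⁻¹).IsHermitian) :
    ConvexOn ℝ (Set.Icc 0 1)
      (fun t : ℝ =>
        Real.log (((hA.posSemidef.sqrt * matRPow hM t * hA.posSemidef.sqrt)⁻¹ * S).trace)) := by
  set R := hA.posSemidef.sqrt with hRdef
  have hRps : R.PosSemidef := by
    have hD : (diagonal ((↑) ∘ (√·) ∘ hA.posSemidef.1.eigenvalues) :
        Matrix (Fin p) (Fin p) ℝ).PosSemidef :=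
      posSemidef_diagonal_iff.mpr fun i => by simp [Real.sqrt_nonneg]
    have := hD.conjTranspose_mul_mul_same
      (star (hA.posSemidef.1.eigenvectorUnitary : Matrix (Fin p) (Fin p) ℝ))
    rw [star_eq_conjTranspose, conjTranspose_conjTranspose] at this
    exact this
  have hRR : R * R = A := by
    have hs := hA.posSemidef.1.spectral_theorem
    rw [Unitary.conjStarAlgAut_apply] at hs
    conv_rhs => rw [hs]
    simp only [hRdef, Matrix.PosSemidef.sqrt, Matrix.mul_assoc]
    rw [← Matrix.mul_assoc (star _) _ _, Unitary.coe_star_mul_self, Matrix.one_mul,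
      ← Matrix.mul_assoc (diagonal _) (diagonal _), diagonal_mul_diagonal]
    congr 3
    funext i
    simp [Real.mul_self_sqrt (hA.posSemidef.eigenvalues_nonneg i)]
  have hRunit : IsUnit R := by
    rw [Matrix.isUnit_iff_isUnit_det]
    have : IsUnit (R.det * R.det) := by
      rw [← Matrix.det_mul, hRR]
      exact hA.det_pos.ne'.isUnit
    exact isUnit_of_mul_isUnit_left this
  have hRpd : R.PosDef := posDef_of_posSemidef_isUnit hRps hRunit
  have hE : (R⁻¹).PosDef := hRpd.inv
  have hEunit : IsUnit (R⁻¹) := hE.isUnit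
  have hMpd : (R⁻¹ * B * R⁻¹).PosDef := by
    have := posDef_conj hB hEunit
    rwa [hE.1.eq] at this
  have hpos : ∀ i, 0 < hM.eigenvalues i := fun i => hMpd.eigenvalues_pos i
  set U : Matrix (Fin p) (Fin p) ℝ := (hM.eigenvectorUnitary : Matrix (Fin p) (Fin p) ℝ)
    with hUdef
  have hUmul : U * star U = 1 := Unitary.mul_star_self_of_mem hM.eigenvectorUnitary.2
  have hUunit : IsUnit U := by
    rw [Matrix.isUnit_iff_isUnit_det]
    exact IsUnit.of_mul_eq_one _ (by rw [← Matrix.det_mul, hUmul, Matrix.det_one])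
  have hX : (R⁻¹ * S * R⁻¹).PosDef := by
    have := posDef_conj hS hEunit
    rwa [hE.1.eq] at this
  have hW : (Uᴴ * (R⁻¹ * S * R⁻¹) * U).PosDef := posDef_conj hX hUunit
  have hc : ∀ i, 0 < (Uᴴ * (R⁻¹ * S * R⁻¹) * U) i i := fun i => posDef_diag_pos hW i
  have key : ∀ t : ℝ, ((R * matRPow hM t * R)⁻¹ * S).trace =
      ∑ i, (Uᴴ * (R⁻¹ * S * R⁻¹) * U) i i *
        Real.exp ((-Real.log (hM.eigenvalues i)) * t) := by
    intro t
    rw [Matrix.mul_inv_rev, Matrix.mul_inv_rev, matRPow_inv hM hpos]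
    rw [show matRPow hM (-t) = U * Matrix.diagonal (fun i => hM.eigenvalues i ^ (-t)) * star U
      from rfl]
    rw [show (R⁻¹ * (U * Matrix.diagonal (fun i => hM.eigenvalues i ^ (-t)) * star U * R⁻¹)) * S
        = (R⁻¹ * U) * (Matrix.diagonal (fun i => hM.eigenvalues i ^ (-t)) * (star U * (R⁻¹ * S)))
      by simp only [Matrix.mul_assoc]]
    rw [Matrix.trace_mul_comm]
    rw [show (Matrix.diagonal (fun i => hM.eigenvalues i ^ (-t)) * (star U * (R⁻¹ * S)))
          * (R⁻¹ * U)
        = Matrix.diagonal (fun i => hM.eigenvalues i ^ (-t)) * (Uᴴ * (R⁻¹ * S * R⁻¹) * U)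
      by simp only [Matrix.star_eq_conjTranspose, Matrix.mul_assoc]]
    rw [Matrix.trace]
    refine Finset.sum_congr rfl fun i _ => ?_
    rw [Matrix.diag]
    rw [Matrix.diagonal_mul]
    rw [Real.rpow_def_of_pos (hpos i),
      show Real.log (hM.eigenvalues i) * (-t) = (-Real.log (hM.eigenvalues i)) * t by ring,
      mul_comm]
  exact (convexOn_log_sum_exp hp _ hc).congr fun t _ => congrArg Real.log (key t).symm
end

section
/- Let E be a Euclidean gradient G·X·G-type transformation: given a symmetric matrix X (Euclidean gradient at SPD matrix G), α > 0 and β with α + pβ > 0, the Riemannian gradient Y = (1/α)·G·X·G - (β/(α(α+pβ)))·tr(X·G)·G satisfies, for all symmetric tangent vectors ξ, the compatibility identity α·tr(G⁻¹YG⁻¹ξ) + β·tr(G⁻¹Y)·tr(G⁻¹ξ) = tr(X·ξ). -/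
open Matrix

/-- The Riemannian gradient for the Fisher-type metric: with
Y = (1/α)·G·X·G - (β/(α(α+pβ)))·tr(XG)·G, one has
α·tr(G⁻¹YG⁻¹ξ) + β·tr(G⁻¹Y)·tr(G⁻¹ξ) = tr(Xξ) for all symmetric ξ. -/
theorem riemannian_gradient_identity
    (p : ℕ) (hp : 0 < p)
    (G X : Matrix (Fin p) (Fin p) ℝ) (hG : G.PosDef) (hX : X.IsSymm)
    (α β : ℝ) (hα : 0 < α) (hαβ : 0 < α + p * β) :
    ∀ ξ : Matrix (Fin p) (Fin p) ℝ, ξ.IsSymm →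
      α * (G⁻¹ * ((1 / α) • (G * X * G) - (β / (α * (α + p * β))) • (X * G).trace • G)
            * G⁻¹ * ξ).trace +
        β * (G⁻¹ * ((1 / α) • (G * X * G) - (β / (α * (α + p * β))) • (X * G).trace • G)).trace *
          (G⁻¹ * ξ).trace = (X * ξ).trace := by
  intro ξ hξ
  have hd : IsUnit G.det := isUnit_iff_ne_zero.mpr hG.det_pos.ne'
  simp only [Matrix.mul_sub, Matrix.sub_mul, Matrix.mul_smul, Matrix.smul_mul, smul_smul,
    trace_sub, trace_smul, smul_eq_mul, Matrix.mul_assoc,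
    Matrix.nonsing_inv_mul_cancel_left _ _ hd, Matrix.mul_nonsing_inv_cancel_left _ _ hd,
    Matrix.mul_nonsing_inv _ hd, Matrix.nonsing_inv_mul _ hd, Matrix.mul_one, trace_one, Fintype.card_fin]
  have hne : α * (α + ↑p * β) ≠ 0 := by positivity
  have hs : α + β * ↑p ≠ 0 := ne_of_gt (by linarith [mul_comm (p:ℝ) β])
  field_simp
  rw [Matrix.one_mul]
  ring
end
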